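/- Let ℓ ≥ 1, k be natural numbers and v < 2^ℓ. Then for every j < k, ((v * ∑_{c ∈ Finset.range k} 2^(c·ℓ)) / 2^(j·ℓ)) % 2^ℓ = v. (In words: every length-ℓ digit block of the product of v with the bit-pattern ∑_{c<k} 2^{cℓ} equals v, so each of the k packed fields of the repeated word can be read back exactly.) -/

import Mathlib

lemma bitRepeat_low_lt (ℓ v : ℕ) (hv : v < 2 ^ ℓ) (j : ℕ) :
    v * ∑ c ∈ Finset.range j, 2 ^ (c * ℓ) < 2 ^ (j * ℓ) := by
  induction j with
  | zero => simp
  | succ j ih =>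
    rw [Finset.sum_range_succ, Nat.mul_add]
    have h1 : v * 2 ^ (j * ℓ) ≤ (2 ^ ℓ - 1) * 2 ^ (j * ℓ) :=
      Nat.mul_le_mul_right _ (Nat.le_sub_one_of_lt hv)
    have h2 : 2 ^ (j * ℓ) + (2 ^ ℓ - 1) * 2 ^ (j * ℓ) = 2 ^ ((j + 1) * ℓ) := by
      have hp : 2 ^ (j * ℓ) ≤ 2 ^ ℓ * 2 ^ (j * ℓ) :=
        Nat.le_mul_of_pos_left _ (Nat.pow_pos (by norm_num))
      rw [Nat.succ_mul, pow_add, Nat.sub_mul, one_mul, Nat.mul_comm (2 ^ (j * ℓ))]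
      omega
    omega

/-- Every length-`ℓ` digit block of the product of `v` with the bit pattern
`∑_{c < k} 2^(c·ℓ)` equals `v`: each of the `k` packed fields of the repeated
word can be read back exactly. -/
theorem bitRepeat_by_mul_extract (ℓ k v : ℕ) (hℓ : 1 ≤ ℓ) (hv : v < 2 ^ ℓ)
    (j : ℕ) (hj : j < k) :
    ((v * ∑ c ∈ Finset.range k, 2 ^ (c * ℓ)) / 2 ^ (j * ℓ)) % 2 ^ ℓ = v := by
  -- split the sum at j
  have hsplit : ∑ c ∈ Finset.range k, 2 ^ (c * ℓ)
      = (∑ c ∈ Finset.range j, 2 ^ (c * ℓ))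
        + 2 ^ (j * ℓ) * ∑ i ∈ Finset.range (k - j), 2 ^ (i * ℓ) := by
    have := Finset.sum_range_add (fun c => 2 ^ (c * ℓ)) j (k - j)
    rw [Nat.add_sub_cancel' hj.le] at this
    rw [this, Finset.mul_sum]
    congr 1
    apply Finset.sum_congr rfl
    intro i _
    rw [← pow_add]
    ring_nf
  rw [hsplit, Nat.mul_add, ← Nat.mul_assoc, Nat.mul_comm v (2 ^ (j * ℓ)),
    Nat.mul_assoc, Nat.add_mul_div_left _ _ (Nat.pow_pos (by norm_num)),
    Nat.div_eq_of_lt (bitRepeat_low_lt ℓ v hv j), Nat.zero_add]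
  -- now reduce (v * ∑_{i < k-j} 2^(iℓ)) % 2^ℓ = v
  have hkj : 1 ≤ k - j := by omega
  obtain ⟨m, hm⟩ : ∃ m, k - j = m + 1 := ⟨k - j - 1, by omega⟩
  rw [hm, Finset.sum_range_succ']
  have : (∑ i ∈ Finset.range m, 2 ^ ((i + 1) * ℓ)) + 2 ^ (0 * ℓ)
      = 1 + 2 ^ ℓ * ∑ i ∈ Finset.range m, 2 ^ (i * ℓ) := by
    rw [Nat.zero_mul, pow_zero, Nat.add_comm, Finset.mul_sum]
    congr 1
    apply Finset.sum_congr rfl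
    intro i _
    rw [← pow_add, Nat.add_mul, Nat.one_mul]
    ring_nf
  rw [this, Nat.mul_add, Nat.mul_one, ← Nat.mul_assoc, Nat.mul_comm v (2 ^ ℓ),
    Nat.mul_assoc, Nat.add_mul_mod_self_left, Nat.mod_eq_of_lt hv]
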